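/- Let φ₁, φ₂ : ℝ → ℝ be twice continuously differentiable functions with φ₁'(0) + φ₂'(0) = 0, and set α = (φ₁''(0) + φ₂''(0))/2 and β = φ₂'(0). Let μ be a probability measure on ℝ^d, let u : ℝ^d → ℝ be a bounded C² function with bounded first and second derivatives, and let v : ℝ^d → ℝ^d be a bounded continuous function. Define h(ε) = ∫ φ₁(ε u(x)) dμ(x) + ∫ φ₂(ε u(x + ε v(x))) dμ(x). Then, as ε → 0, h(ε) = (φ₁(0) + φ₂(0)) + ε² (α ∫ u(x)² dμ(x) + β ∫ ⟨∇u(x), v(x)⟩ dμ(x)) + o(ε²). -/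

import Mathlib

open MeasureTheory Asymptotics Set

private lemma taylor2_bound (φ : ℝ → ℝ) (hφ : ContDiff ℝ 2 φ) {η : ℝ} (hη : 0 < η) :
    ∃ δ > 0, ∀ t : ℝ, |t| ≤ δ →
      |φ t - φ 0 - deriv φ 0 * t - deriv (deriv φ) 0 / 2 * t ^ 2| ≤ η * t ^ 2 := by
  have h2 : ContDiff ℝ (1 + 1) φ := by norm_num; exact hφ
  rw [contDiff_succ_iff_deriv] at h2
  have hd1 : Differentiable ℝ φ := h2.1
  have hd2 : Differentiable ℝ (deriv φ) := h2.2.2.differentiable one_ne_zero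
  have hc2 : Continuous (deriv (deriv φ)) := h2.2.2.continuous_deriv le_rfl
  obtain ⟨δ0, hδ0pos, hδ0⟩ := Metric.continuousAt_iff.mp (hc2.continuousAt (x := 0)) η hη
  set δ : ℝ := δ0 / 2 with hδdef
  have hδpos : 0 < δ := by positivity
  have hδ : ∀ s : ℝ, |s| ≤ δ → |deriv (deriv φ) s - deriv (deriv φ) 0| ≤ η := by
    intro s hs
    have h1 : dist s 0 < δ0 := by
      rw [Real.dist_eq, sub_zero]
      calc |s| ≤ δ0 / 2 := hs
        _ < δ0 := by linarith
    have := hδ0 h1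
    rw [Real.dist_eq] at this
    exact this.le
  refine ⟨δ, hδpos, fun t ht => ?_⟩
  set p := deriv φ 0
  set c := deriv (deriv φ) 0 with hc
  have hg : ∀ s : ℝ, |s| ≤ δ → |deriv φ s - p - c * s| ≤ η * |s| := by
    intro s hs
    have h1 : ∀ r ∈ Icc (-|s|) |s|, HasDerivWithinAt (fun r => deriv φ r - c * r)
        (deriv (deriv φ) r - c) (Icc (-|s|) (|s|)) r := by
      intro r _
      have : HasDerivAt (fun r => deriv φ r - c * r) (deriv (deriv φ) r - c * 1) r :=
        ((hd2 r).hasDerivAt).sub ((hasDerivAt_id r).const_mul c)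
      simpa using this.hasDerivWithinAt
    have h2 : ∀ r ∈ Icc (-|s|) |s|, ‖deriv (deriv φ) r - c‖ ≤ η := by
      intro r hr
      have : |r| ≤ |s| := abs_le.mpr hr
      exact hδ r (this.trans hs)
    have h3 := (convex_Icc _ _).norm_image_sub_le_of_norm_hasDerivWithin_le h1 h2
      (by constructor <;> simp [abs_nonneg] : (0:ℝ) ∈ Icc (-|s|) |s|)
      (by constructor <;> [exact neg_abs_le s; exact le_abs_self s] : s ∈ Icc (-|s|) |s|)
    rw [Real.norm_eq_abs] at h3
    calc |deriv φ s - p - c * s| = |(deriv φ s - c * s) - (deriv φ 0 - c * 0)| := by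
          rw [hc]; simp only [p]; ring_nf
      _ ≤ η * ‖s - 0‖ := h3
      _ = η * |s| := by rw [Real.norm_eq_abs, sub_zero]
  have h1 : ∀ r ∈ Icc (-|t|) |t|, HasDerivWithinAt (fun r => φ r - p * r - c / 2 * r ^ 2)
      (deriv φ r - p - c * r) (Icc (-|t|) (|t|)) r := by
    intro r _
    have h0 : HasDerivAt (fun r : ℝ => φ r - p * r - c / 2 * r ^ 2)
        (deriv φ r - p * 1 - c / 2 * (↑2 * r ^ 1)) r :=
      (((hd1 r).hasDerivAt).sub ((hasDerivAt_id r).const_mul p)).sub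
        ((hasDerivAt_pow 2 r).const_mul (c / 2))
    have he : deriv φ r - p * 1 - c / 2 * (↑2 * r ^ 1) = deriv φ r - p - c * r := by
      ring
    rw [he] at h0
    exact h0.hasDerivWithinAt
  have h2 : ∀ r ∈ Icc (-|t|) |t|, ‖deriv φ r - p - c * r‖ ≤ η * |t| := by
    intro r hr
    have hrt : |r| ≤ |t| := abs_le.mpr hr
    calc ‖deriv φ r - p - c * r‖ = |deriv φ r - p - c * r| := Real.norm_eq_abs _
      _ ≤ η * |r| := hg r (hrt.trans ht)
      _ ≤ η * |t| := by nlinarith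
  have h3 := (convex_Icc _ _).norm_image_sub_le_of_norm_hasDerivWithin_le h1 h2
    (by constructor <;> simp [abs_nonneg] : (0:ℝ) ∈ Icc (-|t|) |t|)
    (by constructor <;> [exact neg_abs_le t; exact le_abs_self t] : t ∈ Icc (-|t|) |t|)
  rw [Real.norm_eq_abs, Real.norm_eq_abs, sub_zero] at h3
  calc |φ t - φ 0 - p * t - c / 2 * t ^ 2|
      = |(φ t - p * t - c / 2 * t ^ 2) - (φ 0 - p * 0 - c / 2 * 0 ^ 2)| := by ring_nf
    _ ≤ η * |t| * |t| := h3
    _ = η * t ^ 2 := by rw [mul_assoc, abs_mul_abs_self]; ring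

private lemma lip_of_fderiv_bound {E F : Type*} [NormedAddCommGroup E] [NormedSpace ℝ E]
    [NormedAddCommGroup F] [NormedSpace ℝ F]
    (f : E → F) (hf : Differentiable ℝ f) {M : ℝ} (hM : ∀ x, ‖fderiv ℝ f x‖ ≤ M) :
    ∀ x y : E, ‖f y - f x‖ ≤ M * ‖y - x‖ := fun x y =>
  Convex.norm_image_sub_le_of_norm_fderiv_le (fun _ _ => hf.differentiableAt)
    (fun z _ => hM z) convex_univ (mem_univ x) (mem_univ y)

private lemma second_order_taylor_bound {E : Type*} [NormedAddCommGroup E] [NormedSpace ℝ E]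
    (f : E → ℝ) (hf : ContDiff ℝ 2 f) {M : ℝ} (hM : ∀ x, ‖fderiv ℝ (fderiv ℝ f) x‖ ≤ M)
    (x y : E) : ‖f y - f x - fderiv ℝ f x (y - x)‖ ≤ M * ‖y - x‖ * ‖y - x‖ := by
  have hf1 : Differentiable ℝ f := hf.differentiable two_ne_zero
  have h2 : ContDiff ℝ (1 + 1) f := by norm_num; exact hf
  rw [contDiff_succ_iff_fderiv] at h2
  have hf2 : Differentiable ℝ (fderiv ℝ f) := h2.2.2.differentiable one_ne_zero
  have hlip := lip_of_fderiv_bound (fderiv ℝ f) hf2 hM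
  set F := fun z => f z - fderiv ℝ f x z with hF
  have hFd : ∀ z, DifferentiableAt ℝ F z := fun z =>
    (hf1 z).sub ((fderiv ℝ f x).differentiable z)
  have hFder : ∀ z, fderiv ℝ F z = fderiv ℝ f z - fderiv ℝ f x := by
    intro z
    rw [hF, fderiv_fun_sub (hf1 z) ((fderiv ℝ f x).differentiable z), (fderiv ℝ f x).fderiv]
  have hball : Convex ℝ (Metric.closedBall x ‖y - x‖) := convex_closedBall _ _
  have hxm : x ∈ Metric.closedBall x ‖y - x‖ := Metric.mem_closedBall_self (norm_nonneg _)
  have hym : y ∈ Metric.closedBall x ‖y - x‖ := by rw [Metric.mem_closedBall, dist_eq_norm]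
  have hbd : ∀ z ∈ Metric.closedBall x ‖y - x‖, ‖fderiv ℝ F z‖ ≤ M * ‖y - x‖ := by
    intro z hz
    rw [hFder]
    calc ‖fderiv ℝ f z - fderiv ℝ f x‖ ≤ M * ‖z - x‖ := hlip x z
      _ ≤ M * ‖y - x‖ := by
          have h0 : 0 ≤ M := le_trans (norm_nonneg (fderiv ℝ (fderiv ℝ f) x)) (hM x)
          have : ‖z - x‖ ≤ ‖y - x‖ := by rwa [Metric.mem_closedBall, dist_eq_norm] at hz
          nlinarith
  have h3 := hball.norm_image_sub_le_of_norm_fderiv_le (fun z _ => hFd z) hbd hxm hym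
  have heq : F y - F x = f y - f x - fderiv ℝ f x (y - x) := by
    rw [hF]; simp [map_sub]; ring
  rw [heq] at h3
  exact h3

set_option maxHeartbeats 1000000 in
/-- Second-order (linearized GAN) approximation of the GAN objective around the
Nash equilibrium `D* = 0`: with discriminator perturbation `ε u` and generator
perturbation (in data space) `ε v`,
`h(ε) = ∫ φ₁(ε u) dμ + ∫ φ₂(ε u(x + ε v x)) dμ
       = (φ₁ 0 + φ₂ 0) + ε² (α ∫ u² dμ + β ∫ ⟨∇u, v⟩ dμ) + o(ε²)`. -/
theorem second_order_gan_approximation {d : ℕ} (φ₁ φ₂ : ℝ → ℝ)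
    (hφ₁ : ContDiff ℝ 2 φ₁) (hφ₂ : ContDiff ℝ 2 φ₂)
    (hfirst : deriv φ₁ 0 + deriv φ₂ 0 = 0)
    (α β : ℝ)
    (hα : α = (deriv (deriv φ₁) 0 + deriv (deriv φ₂) 0) / 2)
    (hβ : β = deriv φ₂ 0)
    (μ : Measure (EuclideanSpace ℝ (Fin d))) [IsProbabilityMeasure μ]
    (u : EuclideanSpace ℝ (Fin d) → ℝ) (hu : ContDiff ℝ 2 u)
    (hub : ∃ M, ∀ x, |u x| ≤ M)
    (hub1 : ∃ M, ∀ x, ‖fderiv ℝ u x‖ ≤ M)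
    (hub2 : ∃ M, ∀ x, ‖fderiv ℝ (fderiv ℝ u) x‖ ≤ M)
    (v : EuclideanSpace ℝ (Fin d) → EuclideanSpace ℝ (Fin d))
    (hvc : Continuous v) (hvb : ∃ M, ∀ x, ‖v x‖ ≤ M)
    (h : ℝ → ℝ)
    (hh : ∀ ε : ℝ, h ε = (∫ x, φ₁ (ε * u x) ∂μ) + ∫ x, φ₂ (ε * u (x + ε • v x)) ∂μ) :
    (fun ε : ℝ => h ε - (φ₁ 0 + φ₂ 0)
        - ε ^ 2 * (α * (∫ x, (u x) ^ 2 ∂μ)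
          + β * ∫ x, (inner ℝ (gradient u x) (v x) : ℝ) ∂μ))
      =o[nhds 0] fun ε : ℝ => ε ^ 2 := by
  obtain ⟨M₀, hM₀⟩ := hub
  obtain ⟨M₁, hM₁⟩ := hub1
  obtain ⟨M₂, hM₂⟩ := hub2
  obtain ⟨Mv, hMv⟩ := hvb
  have hM₀0 : 0 ≤ M₀ := le_trans (abs_nonneg _) (hM₀ 0)
  have hM₁0 : 0 ≤ M₁ := le_trans (norm_nonneg _) (hM₁ 0)
  have hM₂0 : 0 ≤ M₂ := le_trans (norm_nonneg (fderiv ℝ (fderiv ℝ u) 0)) (hM₂ 0)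
  have hMv0 : 0 ≤ Mv := le_trans (norm_nonneg _) (hMv 0)
  have hud : Differentiable ℝ u := hu.differentiable two_ne_zero
  -- gradient facts
  have hgrad : ∀ x, (inner ℝ (gradient u x) (v x) : ℝ) = fderiv ℝ u x (v x) := by
    intro x
    rw [gradient]
    exact InnerProductSpace.toDual_symm_apply
  have hgradc : Continuous (fun x => gradient u x) := by
    simp only [gradient]
    exact (LinearIsometryEquiv.continuous _).comp (hu.continuous_fderiv two_ne_zero)
  have hgbd : ∀ x, |(inner ℝ (gradient u x) (v x) : ℝ)| ≤ M₁ * Mv := by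
    intro x
    calc |(inner ℝ (gradient u x) (v x) : ℝ)| ≤ ‖gradient u x‖ * ‖v x‖ := by
          simpa using norm_inner_le_norm (𝕜 := ℝ) (gradient u x) (v x)
      _ = ‖fderiv ℝ u x‖ * ‖v x‖ := by rw [gradient, LinearIsometryEquiv.norm_map]
      _ ≤ M₁ * Mv := mul_le_mul (hM₁ x) (hMv x) (norm_nonneg _) hM₁0
  have key1 := lip_of_fderiv_bound u hud hM₁
  have key2 := second_order_taylor_bound u hu hM₂
  -- start littleO proof
  rw [isLittleO_iff]
  intro c hc
  have hηpos : 0 < c / (4 * (M₀ + 1) ^ 2) := by positivity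
  obtain ⟨δ₁, hδ₁pos, hδ₁⟩ := taylor2_bound φ₁ hφ₁ hηpos
  obtain ⟨δ₂, hδ₂pos, hδ₂⟩ := taylor2_bound φ₂ hφ₂ hηpos
  set K₃ : ℝ := |β| * M₂ * Mv ^ 2 + 1 with hK₃
  set K₄ : ℝ := |deriv (deriv φ₂) 0| * (M₁ * Mv) * M₀ + 1 with hK₄
  have hK₃pos : 0 < K₃ := by positivity
  have hK₄pos : 0 < K₄ := by positivity
  have hδpos : (0:ℝ) < min (min (δ₁ / (M₀ + 1)) (δ₂ / (M₀ + 1))) (min (c / (4 * K₃)) (c / (4 * K₄))) := by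
    apply lt_min (lt_min (by positivity) (by positivity)) (lt_min (by positivity) (by positivity))
  filter_upwards [Metric.closedBall_mem_nhds (0:ℝ) hδpos] with ε hε
  rw [Metric.mem_closedBall, Real.dist_eq, sub_zero] at hε
  have hε1 : |ε| ≤ δ₁ / (M₀ + 1) := hε.trans ((min_le_left _ _).trans (min_le_left _ _))
  have hε2 : |ε| ≤ δ₂ / (M₀ + 1) := hε.trans ((min_le_left _ _).trans (min_le_right _ _))
  have hε3 : |ε| ≤ c / (4 * K₃) := hε.trans ((min_le_right _ _).trans (min_le_left _ _))
  have hε4 : |ε| ≤ c / (4 * K₄) := hε.trans ((min_le_right _ _).trans (min_le_right _ _))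
  -- pointwise estimate
  have hpt : ∀ x, |φ₁ (ε * u x) + φ₂ (ε * u (x + ε • v x)) - (φ₁ 0 + φ₂ 0)
      - ε ^ 2 * (α * (u x) ^ 2 + β * (inner ℝ (gradient u x) (v x) : ℝ))| ≤ c * ε ^ 2 := by
    intro x
    set U := u x with hU
    set W := u (x + ε • v x) with hW
    set gx : ℝ := inner ℝ (gradient u x) (v x) with hgx
    have hgx' : gx = fderiv ℝ u x (v x) := hgrad x
    have hUb : |U| ≤ M₀ := hM₀ x
    have hWb : |W| ≤ M₀ := hM₀ _
    have hyx : (x + ε • v x) - x = ε • v x := add_sub_cancel_left x _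
    have hnyx : ‖(x + ε • v x) - x‖ ≤ |ε| * Mv := by
      rw [hyx, norm_smul, Real.norm_eq_abs]
      exact mul_le_mul_of_nonneg_left (hMv x) (abs_nonneg ε)
    -- argument bounds for Taylor
    have hMle : M₀ ≤ M₀ + 1 := by linarith
    have harg : ∀ (X : ℝ), |X| ≤ M₀ → ∀ (δ' : ℝ), |ε| ≤ δ' / (M₀ + 1) → |ε * X| ≤ δ' := by
      intro X hX δ' hεδ
      calc |ε * X| = |ε| * |X| := abs_mul ε X
        _ ≤ (δ' / (M₀ + 1)) * (M₀ + 1) :=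
            mul_le_mul hεδ (hX.trans hMle) (abs_nonneg X) ((abs_nonneg ε).trans hεδ)
        _ = δ' := by field_simp
    have hhelp : ∀ (X : ℝ), |X| ≤ M₀ → c / (4 * (M₀ + 1) ^ 2) * (ε * X) ^ 2 ≤ c / 4 * ε ^ 2 := by
      intro X hX
      have hX2 : X ^ 2 ≤ (M₀ + 1) ^ 2 := by nlinarith [sq_abs X, abs_nonneg X]
      have hre : (ε * X) ^ 2 = ε ^ 2 * X ^ 2 := by ring
      rw [hre]
      calc c / (4 * (M₀ + 1) ^ 2) * (ε ^ 2 * X ^ 2)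
          ≤ c / (4 * (M₀ + 1) ^ 2) * (ε ^ 2 * (M₀ + 1) ^ 2) :=
            mul_le_mul_of_nonneg_left
              (mul_le_mul_of_nonneg_left hX2 (sq_nonneg ε)) (le_of_lt hηpos)
        _ = c / 4 * ε ^ 2 := by field_simp
    -- Taylor remainders
    have e1 := hδ₁ (ε * U) (harg U hUb δ₁ hε1)
    have e2 := hδ₂ (ε * W) (harg W hWb δ₂ hε2)
    have e1' : |φ₁ (ε * U) - φ₁ 0 - deriv φ₁ 0 * (ε * U) - deriv (deriv φ₁) 0 / 2 * (ε * U) ^ 2|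
        ≤ c / 4 * ε ^ 2 := e1.trans (hhelp U hUb)
    have e2' : |φ₂ (ε * W) - φ₂ 0 - deriv φ₂ 0 * (ε * W) - deriv (deriv φ₂) 0 / 2 * (ε * W) ^ 2|
        ≤ c / 4 * ε ^ 2 := e2.trans (hhelp W hWb)
    -- term 3
    have hb3 : |W - U - ε * gx| ≤ M₂ * Mv ^ 2 * ε ^ 2 := by
      have h0 := key2 x (x + ε • v x)
      rw [hyx] at h0
      have hmap : fderiv ℝ u x (ε • v x) = ε * fderiv ℝ u x (v x) := by
        rw [ContinuousLinearMap.map_smul]; simp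
      rw [hmap, Real.norm_eq_abs] at h0
      have hsm : ‖ε • v x‖ ≤ |ε| * Mv := by
        rw [norm_smul, Real.norm_eq_abs]
        exact mul_le_mul_of_nonneg_left (hMv x) (abs_nonneg ε)
      have hsm0 : (0:ℝ) ≤ ‖ε • v x‖ := norm_nonneg _
      calc |W - U - ε * gx| = |W - U - ε * fderiv ℝ u x (v x)| := by rw [hgx']
        _ ≤ M₂ * ‖ε • v x‖ * ‖ε • v x‖ := h0
        _ ≤ M₂ * (|ε| * Mv) * (|ε| * Mv) := by
            nlinarith [hsm, hsm0, hM₂0, mul_le_mul hsm hsm hsm0 (by positivity : (0:ℝ) ≤ |ε| * Mv)]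
        _ = M₂ * Mv ^ 2 * (|ε| * |ε|) := by ring
        _ = M₂ * Mv ^ 2 * ε ^ 2 := by rw [abs_mul_abs_self]; ring
    have e3 : |β * ε * (W - U - ε * gx)| ≤ c / 4 * ε ^ 2 := by
      have hmain : |β| * M₂ * Mv ^ 2 * |ε| ≤ c / 4 := by
        calc |β| * M₂ * Mv ^ 2 * |ε| ≤ K₃ * |ε| :=
              mul_le_mul_of_nonneg_right (by rw [hK₃]; linarith) (abs_nonneg ε)
          _ ≤ K₃ * (c / (4 * K₃)) := mul_le_mul_of_nonneg_left hε3 hK₃pos.le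
          _ = c / 4 := by field_simp
      calc |β * ε * (W - U - ε * gx)| = |β| * |ε| * |W - U - ε * gx| := by
            rw [abs_mul, abs_mul]
        _ ≤ |β| * |ε| * (M₂ * Mv ^ 2 * ε ^ 2) := by
            apply mul_le_mul_of_nonneg_left hb3 (by positivity)
        _ = (|β| * M₂ * Mv ^ 2 * |ε|) * ε ^ 2 := by ring
        _ ≤ c / 4 * ε ^ 2 := mul_le_mul_of_nonneg_right hmain (sq_nonneg ε)
    -- term 4
    have hWU : |W - U| ≤ M₁ * Mv * |ε| := by
      have h0 := key1 x (x + ε • v x)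
      rw [Real.norm_eq_abs] at h0
      calc |W - U| ≤ M₁ * ‖(x + ε • v x) - x‖ := h0
        _ ≤ M₁ * (|ε| * Mv) := mul_le_mul_of_nonneg_left hnyx hM₁0
        _ = M₁ * Mv * |ε| := by ring
    have hUW : |U + W| ≤ 2 * M₀ := by
      calc |U + W| ≤ |U| + |W| := abs_add_le U W
        _ ≤ 2 * M₀ := by linarith
    have e4 : |deriv (deriv φ₂) 0 / 2 * ε ^ 2 * (W - U) * (U + W)| ≤ c / 4 * ε ^ 2 := by
      have habs : |deriv (deriv φ₂) 0 / 2 * ε ^ 2 * (W - U) * (U + W)|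
          = |deriv (deriv φ₂) 0| / 2 * ε ^ 2 * |W - U| * |U + W| := by
        rw [abs_mul, abs_mul, abs_mul, abs_div, abs_two, abs_of_nonneg (sq_nonneg ε)]
      rw [habs]
      have hmain : |deriv (deriv φ₂) 0| * (M₁ * Mv) * M₀ * |ε| ≤ c / 4 := by
        calc |deriv (deriv φ₂) 0| * (M₁ * Mv) * M₀ * |ε| ≤ K₄ * |ε| :=
              mul_le_mul_of_nonneg_right (by rw [hK₄]; linarith) (abs_nonneg ε)
          _ ≤ K₄ * (c / (4 * K₄)) := mul_le_mul_of_nonneg_left hε4 hK₄pos.le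
          _ = c / 4 := by field_simp
      calc |deriv (deriv φ₂) 0| / 2 * ε ^ 2 * |W - U| * |U + W|
          ≤ |deriv (deriv φ₂) 0| / 2 * ε ^ 2 * (M₁ * Mv * |ε|) * (2 * M₀) := by
            gcongr <;> positivity
        _ = (|deriv (deriv φ₂) 0| * (M₁ * Mv) * M₀ * |ε|) * ε ^ 2 := by ring
        _ ≤ c / 4 * ε ^ 2 := mul_le_mul_of_nonneg_right hmain (sq_nonneg ε)
    -- algebraic identity
    have hid : φ₁ (ε * U) + φ₂ (ε * W) - (φ₁ 0 + φ₂ 0) - ε ^ 2 * (α * U ^ 2 + β * gx)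
        = (φ₁ (ε * U) - φ₁ 0 - deriv φ₁ 0 * (ε * U) - deriv (deriv φ₁) 0 / 2 * (ε * U) ^ 2)
        + (φ₂ (ε * W) - φ₂ 0 - deriv φ₂ 0 * (ε * W) - deriv (deriv φ₂) 0 / 2 * (ε * W) ^ 2)
        + β * ε * (W - U - ε * gx)
        + deriv (deriv φ₂) 0 / 2 * ε ^ 2 * (W - U) * (U + W) := by
      have h1 : deriv φ₁ 0 = -deriv φ₂ 0 := by linarith
      rw [hα, hβ, h1]; ring
    rw [hid]
    have := abs_add_le
      ((φ₁ (ε * U) - φ₁ 0 - deriv φ₁ 0 * (ε * U) - deriv (deriv φ₁) 0 / 2 * (ε * U) ^ 2)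
        + (φ₂ (ε * W) - φ₂ 0 - deriv φ₂ 0 * (ε * W) - deriv (deriv φ₂) 0 / 2 * (ε * W) ^ 2)
        + β * ε * (W - U - ε * gx))
      (deriv (deriv φ₂) 0 / 2 * ε ^ 2 * (W - U) * (U + W))
    have h4 := abs_add_le
      ((φ₁ (ε * U) - φ₁ 0 - deriv φ₁ 0 * (ε * U) - deriv (deriv φ₁) 0 / 2 * (ε * U) ^ 2)
        + (φ₂ (ε * W) - φ₂ 0 - deriv φ₂ 0 * (ε * W) - deriv (deriv φ₂) 0 / 2 * (ε * W) ^ 2))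
      (β * ε * (W - U - ε * gx))
    have h5 := abs_add_le
      (φ₁ (ε * U) - φ₁ 0 - deriv φ₁ 0 * (ε * U) - deriv (deriv φ₁) 0 / 2 * (ε * U) ^ 2)
      (φ₂ (ε * W) - φ₂ 0 - deriv φ₂ 0 * (ε * W) - deriv (deriv φ₂) 0 / 2 * (ε * W) ^ 2)
    linarith
  -- integrability
  have haem : ∀ (f : EuclideanSpace ℝ (Fin d) → ℝ), Continuous f →
      AEStronglyMeasurable f μ := fun f hf => hf.aestronglyMeasurable
  have hcy : Continuous fun x : EuclideanSpace ℝ (Fin d) => x + ε • v x :=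
    continuous_id.add (hvc.const_smul ε)
  have hbnd_int : ∀ (f : EuclideanSpace ℝ (Fin d) → ℝ), Continuous f →
      ∀ (C : ℝ), (∀ x, |f x| ≤ C) → Integrable f μ := by
    intro f hf C hC
    exact (integrable_const C).mono' (haem f hf)
      (ae_of_all _ fun x => by rw [Real.norm_eq_abs]; exact hC x)
  have hint1 : Integrable (fun x => φ₁ (ε * u x)) μ := by
    obtain ⟨B, hB⟩ := (isCompact_Icc (a := -(|ε| * M₀)) (b := |ε| * M₀)).exists_bound_of_continuousOn
      hφ₁.continuous.continuousOn
    apply hbnd_int _ (hφ₁.continuous.comp (continuous_const.mul hu.continuous)) B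
    intro x
    have hmem : ε * u x ∈ Icc (-(|ε| * M₀)) (|ε| * M₀) := by
      rw [mem_Icc, ← abs_le, abs_mul]
      exact mul_le_mul_of_nonneg_left (hM₀ x) (abs_nonneg ε)
    simpa using hB _ hmem
  have hint2 : Integrable (fun x => φ₂ (ε * u (x + ε • v x))) μ := by
    obtain ⟨B, hB⟩ := (isCompact_Icc (a := -(|ε| * M₀)) (b := |ε| * M₀)).exists_bound_of_continuousOn
      hφ₂.continuous.continuousOn
    apply hbnd_int _ (hφ₂.continuous.comp (continuous_const.mul (hu.continuous.comp hcy))) B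
    intro x
    have hmem : ε * u (x + ε • v x) ∈ Icc (-(|ε| * M₀)) (|ε| * M₀) := by
      rw [mem_Icc, ← abs_le, abs_mul]
      exact mul_le_mul_of_nonneg_left (hM₀ _) (abs_nonneg ε)
    simpa using hB _ hmem
  have hintU : Integrable (fun x => (u x) ^ 2) μ := by
    apply hbnd_int _ (hu.continuous.pow 2) (M₀ ^ 2)
    intro x
    rw [Pi.pow_apply, abs_pow]
    exact pow_le_pow_left₀ (abs_nonneg _) (hM₀ x) 2
  have hintg : Integrable (fun x => (inner ℝ (gradient u x) (v x) : ℝ)) μ :=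
    hbnd_int _ (hgradc.inner hvc) (M₁ * Mv) hgbd
  -- split the integral
  have hsplit : h ε - (φ₁ 0 + φ₂ 0)
      - ε ^ 2 * (α * (∫ x, (u x) ^ 2 ∂μ) + β * ∫ x, (inner ℝ (gradient u x) (v x) : ℝ) ∂μ)
      = ∫ x, (φ₁ (ε * u x) + φ₂ (ε * u (x + ε • v x)) - (φ₁ 0 + φ₂ 0)
          - ε ^ 2 * (α * (u x) ^ 2 + β * (inner ℝ (gradient u x) (v x) : ℝ))) ∂μ := by
    have hint12 : Integrable (fun x => φ₁ (ε * u x) + φ₂ (ε * u (x + ε • v x))) μ :=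
      hint1.add hint2
    have hintComb : Integrable (fun x => (φ₁ 0 + φ₂ 0)
        + ε ^ 2 * (α * (u x) ^ 2 + β * (inner ℝ (gradient u x) (v x) : ℝ))) μ :=
      (integrable_const _).add (((hintU.const_mul α).add (hintg.const_mul β)).const_mul (ε ^ 2))
    have hintS : Integrable (fun x => α * (u x) ^ 2
        + β * (inner ℝ (gradient u x) (v x) : ℝ)) μ :=
      (hintU.const_mul α).add (hintg.const_mul β)
    have hintS2 : Integrable (fun x => ε ^ 2 * (α * (u x) ^ 2
        + β * (inner ℝ (gradient u x) (v x) : ℝ))) μ := hintS.const_mul (ε ^ 2)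
    have hfe : (fun x => (φ₁ (ε * u x) + φ₂ (ε * u (x + ε • v x)) - (φ₁ 0 + φ₂ 0)
        - ε ^ 2 * (α * (u x) ^ 2 + β * (inner ℝ (gradient u x) (v x) : ℝ))))
        = fun x => (φ₁ (ε * u x) + φ₂ (ε * u (x + ε • v x)))
          - ((φ₁ 0 + φ₂ 0) + ε ^ 2 * (α * (u x) ^ 2 + β * (inner ℝ (gradient u x) (v x) : ℝ))) := by
      funext x; ring
    rw [hfe, integral_sub hint12 hintComb, integral_add hint1 hint2,
      integral_add (integrable_const _) hintS2,
      integral_const, integral_const_mul, integral_add (hintU.const_mul α) (hintg.const_mul β),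
      integral_const_mul, integral_const_mul, hh ε]
    simp [measure_univ]
    ring
  rw [hsplit]
  have hnormle := norm_integral_le_of_norm_le (μ := μ) (integrable_const (c * ε ^ 2))
    (ae_of_all _ fun x => by rw [Real.norm_eq_abs]; exact hpt x)
  rw [integral_const, probReal_univ, one_smul] at hnormle
  calc ‖∫ x, (φ₁ (ε * u x) + φ₂ (ε * u (x + ε • v x)) - (φ₁ 0 + φ₂ 0)
          - ε ^ 2 * (α * (u x) ^ 2 + β * (inner ℝ (gradient u x) (v x) : ℝ))) ∂μ‖
      ≤ c * ε ^ 2 := hnormle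
    _ = c * ‖ε ^ 2‖ := by rw [Real.norm_eq_abs, abs_of_nonneg (sq_nonneg ε)]
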